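/- The number of n×n upper-triangular matrices B over 𝔽₂ with B² = O is a vanishing proportion of all n×n upper-triangular matrices over 𝔽₂: as n → ∞, |ℬₙ| / 2^{n(n+1)/2} → 0. -/

import Mathlib

open Matrix Filter

lemma diag_zero {n : ℕ} {B : Matrix (Fin n) (Fin n) (ZMod 2)}
    (hT : B.BlockTriangular id) (hS : B ^ 2 = 0) (i : Fin n) : B i i = 0 := by
  have h2 : (B ^ 2) i i = 0 := by rw [hS]; rfl
  rw [pow_two, Matrix.mul_apply] at h2
  rw [Finset.sum_eq_single i] at h2
  · exact mul_self_eq_zero.mp h2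
  · intro k _ hk
    rcases lt_or_gt_of_ne hk with h | h
    · rw [hT (show id k < id i from h), zero_mul]
    · rw [hT (show id i < id k from h), mul_zero]
  · intro h; exact absurd (Finset.mem_univ i) h

lemma card_bound (n : ℕ) :
    Nat.card {B : Matrix (Fin n) (Fin n) (ZMod 2) //
        B.BlockTriangular id ∧ B ^ 2 = 0} ≤ 2 ^ (n * (n - 1) / 2) := by
  have key : Nat.card {B : Matrix (Fin n) (Fin n) (ZMod 2) //
        B.BlockTriangular id ∧ B ^ 2 = 0} ≤
      Nat.card (∀ j : Fin n, Fin j.val → ZMod 2) := by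
    apply Nat.card_le_card_of_injective
      (fun B => fun j i => B.1 ⟨i.val, i.isLt.trans j.isLt⟩ j)
    rintro ⟨B, hBT, hBS⟩ ⟨C, hCT, hCS⟩ h
    simp only [Subtype.mk.injEq] at h ⊢
    ext i j
    rcases lt_trichotomy i j with hij | hij | hij
    · have := congrFun (congrFun h j) ⟨i.val, hij⟩
      simpa using this
    · subst hij
      rw [diag_zero hBT hBS, diag_zero hCT hCS]
    · rw [hBT (show id j < id i from hij), hCT (show id j < id i from hij)]
  calc Nat.card {B : Matrix (Fin n) (Fin n) (ZMod 2) //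
        B.BlockTriangular id ∧ B ^ 2 = 0}
      ≤ Nat.card (∀ j : Fin n, Fin j.val → ZMod 2) := key
    _ = 2 ^ (n * (n - 1) / 2) := by
        rw [Nat.card_pi]
        have : ∀ j : Fin n, Nat.card (Fin j.val → ZMod 2) = 2 ^ j.val := by
          intro j
          rw [Nat.card_fun, Nat.card_zmod, Nat.card_eq_fintype_card, Fintype.card_fin]
        rw [Finset.prod_congr rfl (fun j _ => this j), Finset.prod_pow_eq_pow_sum]
        congr 1
        rw [Fin.sum_univ_eq_sum_range (fun i => i) n, Finset.sum_range_id]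

theorem stmt_19 :
    Tendsto (fun n : ℕ =>
      (Nat.card {B : Matrix (Fin n) (Fin n) (ZMod 2) //
          B.BlockTriangular id ∧ B ^ 2 = 0} : ℝ) / 2 ^ (n * (n + 1) / 2))
      atTop (nhds 0) := by
  have hexp : ∀ n : ℕ, n * (n + 1) / 2 = n * (n - 1) / 2 + n := by
    intro n
    have h1 : n * (n - 1) + 2 * n = n * (n + 1) := by
      cases n with
      | zero => rfl
      | succ m => simp [Nat.succ_sub_one]; ring
    omega
  apply squeeze_zero (g := fun n => (1 / 2 : ℝ) ^ n)
  · intro n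
    positivity
  · intro n
    have hc : (Nat.card {B : Matrix (Fin n) (Fin n) (ZMod 2) //
        B.BlockTriangular id ∧ B ^ 2 = 0} : ℝ) ≤ 2 ^ (n * (n - 1) / 2) := by
      exact_mod_cast card_bound n
    rw [div_le_iff₀ (by positivity)]
    calc (Nat.card {B : Matrix (Fin n) (Fin n) (ZMod 2) //
          B.BlockTriangular id ∧ B ^ 2 = 0} : ℝ)
        ≤ 2 ^ (n * (n - 1) / 2) := hc
      _ = (1 / 2 : ℝ) ^ n * 2 ^ (n * (n + 1) / 2) := by
          rw [hexp n, pow_add]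
          field_simp
          rw [← mul_pow]; norm_num
  · exact tendsto_pow_atTop_nhds_zero_of_lt_one (by norm_num) (by norm_num)
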